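/- Let g be a nontrivial (nonabelian or nonzero) finite-dimensional real solvable Lie algebra with cyclic inner product, and {e₁,…,e_n} an adapted orthonormal basis (so g₁ = span{e₁,…,e_{n−1}} is an ideal). Then g splits as the orthogonal semidirect sum of ℝe_n and g₁, the restriction of the inner product to g₁ is cyclic, and ad_{e_n} restricted to g₁ is self-adjoint. -/

import Mathlib

/-- A nontrivial finite-dimensional real solvable Lie algebra with cyclic
inner product and adapted orthonormal basis `{e₁,…,e_n}` (structure constants
`c_{ij}^k = 0` for `k ≥ max{i,j}`) splits as the orthogonal semidirect sum of `ℝ e_n` and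
the ideal `g₁ = span{e₁,…,e_{n−1}}`; the restriction of the inner product to `g₁` is
cyclic, and `ad_{e_n}` restricted to `g₁` is self-adjoint. -/
theorem solvable_cyclic_splits {L : Type*} [LieRing L] [LieAlgebra ℝ L]
    [FiniteDimensional ℝ L] [LieAlgebra.IsSolvable L] {n : ℕ}
    (ip : L →ₗ[ℝ] L →ₗ[ℝ] ℝ)
    (hsymm : ∀ x y : L, ip x y = ip y x)
    (hpos : ∀ x : L, x ≠ 0 → 0 < ip x x)
    (hcyc : ∀ X Y Z : L, ip ⁅X, Y⁆ Z + ip ⁅Y, Z⁆ X + ip ⁅Z, X⁆ Y = 0)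
    (e : Module.Basis (Fin (n + 1)) ℝ L)
    (horth : ∀ i j, ip (e i) (e j) = if i = j then 1 else 0)
    (hadapted : ∀ i j k : Fin (n + 1), max i j ≤ k → ip ⁅e i, e j⁆ (e k) = 0) :
    (∀ Y ∈ Submodule.span ℝ (Set.range fun i : Fin n => e i.castSucc),
        ∀ X : L, ⁅X, Y⁆ ∈ Submodule.span ℝ (Set.range fun i : Fin n => e i.castSucc)) ∧
      (Submodule.span ℝ ({e (Fin.last n)} : Set L) ⊔
          Submodule.span ℝ (Set.range fun i : Fin n => e i.castSucc) = ⊤) ∧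
      (∀ Y ∈ Submodule.span ℝ (Set.range fun i : Fin n => e i.castSucc),
        ip (e (Fin.last n)) Y = 0) ∧
      (∀ X ∈ Submodule.span ℝ (Set.range fun i : Fin n => e i.castSucc),
        ∀ Y ∈ Submodule.span ℝ (Set.range fun i : Fin n => e i.castSucc),
          ∀ Z ∈ Submodule.span ℝ (Set.range fun i : Fin n => e i.castSucc),
            ip ⁅X, Y⁆ Z + ip ⁅Y, Z⁆ X + ip ⁅Z, X⁆ Y = 0) ∧
      (∀ X ∈ Submodule.span ℝ (Set.range fun i : Fin n => e i.castSucc),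
        ∀ Y ∈ Submodule.span ℝ (Set.range fun i : Fin n => e i.castSucc),
          ip ⁅e (Fin.last n), X⁆ Y = ip X ⁅e (Fin.last n), Y⁆) := by
  set S : Submodule ℝ L := Submodule.span ℝ (Set.range fun i : Fin n => e i.castSucc) with hS
  -- all brackets are orthogonal to e (Fin.last n)
  have hbr : ∀ X Y : L, ip ⁅X, Y⁆ (e (Fin.last n)) = 0 := by
    have htop : ∀ x : L, x ∈ Submodule.span ℝ (Set.range e) := by
      intro x; rw [e.span_eq]; trivial
    intro X Y
    refine Submodule.span_induction (p := fun x _ => ip ⁅x, Y⁆ (e (Fin.last n)) = 0)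
      ?_ ?_ ?_ ?_ (htop X)
    · rintro x ⟨i, rfl⟩
      refine Submodule.span_induction (p := fun y _ => ip ⁅e i, y⁆ (e (Fin.last n)) = 0)
        ?_ ?_ ?_ ?_ (htop Y)
      · rintro y ⟨j, rfl⟩
        exact hadapted i j (Fin.last n) (by simp [Fin.le_last])
      · simp
      · intro a b _ _ ha hb; simp [ha, hb]
      · intro r a _ ha; simp [ha]
    · simp
    · intro a b _ _ ha hb; simp [ha, hb]
    · intro r a _ ha; simp [ha]
  -- e_last orthogonal to S
  have hperp : ∀ Y ∈ S, ip (e (Fin.last n)) Y = 0 := by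
    intro Y hY
    refine Submodule.span_induction (p := fun y _ => ip (e (Fin.last n)) y = 0)
      ?_ ?_ ?_ ?_ hY
    · rintro y ⟨j, rfl⟩
      rw [horth]
      simp [(Fin.castSucc_lt_last j).ne']
    · simp
    · intro a b _ _ ha hb; simp [ha, hb]
    · intro r a _ ha; simp [ha]
  -- the sup is everything
  have hsup : Submodule.span ℝ ({e (Fin.last n)} : Set L) ⊔ S = ⊤ := by
    rw [eq_top_iff, ← e.span_eq, Submodule.span_le]
    rintro x ⟨i, rfl⟩
    rcases eq_or_ne i (Fin.last n) with rfl | hi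
    · exact Submodule.mem_sup_left (Submodule.mem_span_singleton_self _)
    · obtain ⟨j, rfl⟩ := Fin.exists_castSucc_eq.2 hi
      exact Submodule.mem_sup_right (Submodule.subset_span ⟨j, rfl⟩)
  -- membership criterion
  have hmem : ∀ x : L, ip x (e (Fin.last n)) = 0 → x ∈ S := by
    intro x hx
    have : x ∈ Submodule.span ℝ ({e (Fin.last n)} : Set L) ⊔ S := by
      rw [hsup]; trivial
    obtain ⟨y, hy, z, hz, rfl⟩ := Submodule.mem_sup.1 this
    obtain ⟨a, rfl⟩ := Submodule.mem_span_singleton.1 hy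
    have hz0 : ip z (e (Fin.last n)) = 0 := by rw [hsymm]; exact hperp z hz
    have h1 : ip (a • e (Fin.last n) + z) (e (Fin.last n)) = a := by
      rw [map_add, map_smul]
      simp [LinearMap.add_apply, LinearMap.smul_apply, horth, hz0]
    rw [hx] at h1
    rw [← h1, zero_smul, zero_add]
    exact hz
  -- ideal property
  have hideal : ∀ Y ∈ S, ∀ X : L, ⁅X, Y⁆ ∈ S := by
    intro Y _ X
    exact hmem _ (hbr X Y)
  refine ⟨hideal, hsup, hperp, fun X _ Y _ Z _ => hcyc X Y Z, ?_⟩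
  intro X hX Y hY
  have h1 := hcyc (e (Fin.last n)) X Y
  have h2 : ip ⁅X, Y⁆ (e (Fin.last n)) = 0 := hbr X Y
  have h3 : ip ⁅Y, e (Fin.last n)⁆ X = - ip ⁅e (Fin.last n), Y⁆ X := by
    rw [← lie_skew, map_neg, LinearMap.neg_apply]
  rw [h2, h3] at h1
  rw [hsymm X ⁅e (Fin.last n), Y⁆]
  linarith
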